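/- Let λ_1 ≥ … ≥ λ_p ≥ 0 with λ_1 > 0, let x ∈ ℝ^p, and let J_λ^D be the dual norm of the ordered ℓ1-norm J_λ. (i) If x_j > x_l ≥ 0 for indices j, l, then for every ε ∈ (0, (x_j − x_l)/2], the vector x_ε defined by (x_ε)_l = x_l + ε, (x_ε)_j = x_j − ε, (x_ε)_i = x_i otherwise, satisfies J_λ^D(x_ε) ≤ J_λ^D(x). (ii) If x_j > 0, then for every ε ∈ (0, x_j], the vector x̃_ε defined by (x̃_ε)_j = x_j − ε and (x̃_ε)_i = x_i otherwise satisfies J_λ^D(x̃_ε) ≤ J_λ^D(x). -/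

import Mathlib

noncomputable section

/-- `absSorted x k` is the `k`-th largest value (0-indexed) among `|x 0|, …, |x (p-1)|`,
i.e. the components of `|x|` sorted in nonincreasing order. -/
def absSorted {p : ℕ} (x : Fin p → ℝ) (k : Fin p) : ℝ :=
  |x (Tuple.sort (fun i => |x i|) k.rev)|

/-- The ordered ℓ1-norm `J_λ(w) = ∑ i, λ_i |w|_(i)`. -/
def Jlam {p : ℕ} (lam : Fin p → ℝ) (w : Fin p → ℝ) : ℝ :=
  ∑ i, lam i * absSorted w i


/-- The dual norm of the ordered ℓ1-norm: `J_λ^D(x) = max {⟨x, v⟩ : J_λ(v) ≤ 1}`. -/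
def JlamD {p : ℕ} (lam x : Fin p → ℝ) : ℝ :=
  sSup {c | ∃ v : Fin p → ℝ, Jlam lam v ≤ 1 ∧ c = ∑ i, x i * v i}

lemma absSorted_comp {p : ℕ} (v v' : Fin p → ℝ) (σ : Equiv.Perm (Fin p))
    (h : ∀ i, |v' i| = |v (σ i)|) : absSorted v' = absSorted v := by
  funext k
  have hf : (fun i => |v' i|) = (fun i => |v i|) ∘ σ := funext h
  have step : absSorted v' k = |v (σ (Tuple.sort ((fun i => |v i|) ∘ σ) k.rev))| := by
    rw [absSorted, h, hf]
  rw [step]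
  have key := congrFun (Tuple.comp_perm_comp_sort_eq_comp_sort (f := fun i => |v i|) (σ := σ)) k.rev
  simpa [absSorted] using key

lemma Jlam_comp {p : ℕ} (lam v v' : Fin p → ℝ) (σ : Equiv.Perm (Fin p))
    (h : ∀ i, |v' i| = |v (σ i)|) : Jlam lam v' = Jlam lam v := by
  simp [Jlam, absSorted_comp v v' σ h]

lemma abs_le_absSorted_zero {p : ℕ} (hp : 0 < p) (v : Fin p → ℝ) (i : Fin p) :
    |v i| ≤ absSorted v ⟨0, hp⟩ := by
  set f : Fin p → ℝ := fun i => |v i| with hf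
  have h1 : absSorted v ⟨0, hp⟩ = (f ∘ Tuple.sort f) (Fin.rev ⟨0, hp⟩) := rfl
  have h2 : f i = (f ∘ Tuple.sort f) ((Tuple.sort f).symm i) := by simp
  have h3 : ((Tuple.sort f).symm i) ≤ Fin.rev ⟨0, hp⟩ := by
    have h0 : ((⟨0, hp⟩ : Fin p) : ℕ) = 0 := rfl
    rw [Fin.le_def, Fin.val_rev, h0]
    have := ((Tuple.sort f).symm i).isLt
    omega
  calc |v i| = (f ∘ Tuple.sort f) ((Tuple.sort f).symm i) := h2
    _ ≤ (f ∘ Tuple.sort f) (Fin.rev ⟨0, hp⟩) := Tuple.monotone_sort f h3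
    _ = absSorted v ⟨0, hp⟩ := rfl

lemma lam0_mul_le_Jlam {p : ℕ} (hp : 0 < p) (lam : Fin p → ℝ) (hnn : ∀ i, 0 ≤ lam i)
    (v : Fin p → ℝ) : lam ⟨0, hp⟩ * absSorted v ⟨0, hp⟩ ≤ Jlam lam v := by
  exact Finset.single_le_sum (f := fun i => lam i * absSorted v i)
    (fun i _ => mul_nonneg (hnn i) (abs_nonneg _)) (Finset.mem_univ _)

lemma mem_bdd {p : ℕ} (hp : 0 < p) (lam : Fin p → ℝ) (hnn : ∀ i, 0 ≤ lam i)
    (hlam1 : 0 < lam ⟨0, hp⟩) (x : Fin p → ℝ) :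
    BddAbove {c | ∃ v : Fin p → ℝ, Jlam lam v ≤ 1 ∧ c = ∑ i, x i * v i} := by
  refine ⟨∑ i, |x i| * (1 / lam ⟨0, hp⟩), ?_⟩
  rintro c ⟨v, hv, rfl⟩
  have hb : ∀ i, |v i| ≤ 1 / lam ⟨0, hp⟩ := by
    intro i
    rw [le_div_iff₀ hlam1]
    calc |v i| * lam ⟨0, hp⟩ = lam ⟨0, hp⟩ * |v i| := mul_comm _ _
      _ ≤ lam ⟨0, hp⟩ * absSorted v ⟨0, hp⟩ :=
        mul_le_mul_of_nonneg_left (abs_le_absSorted_zero hp v i) hlam1.le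
      _ ≤ Jlam lam v := lam0_mul_le_Jlam hp lam hnn v
      _ ≤ 1 := hv
  calc (∑ i, x i * v i) ≤ ∑ i, |x i * v i| := Finset.sum_le_sum fun i _ => le_abs_self _
    _ = ∑ i, |x i| * |v i| := by simp [abs_mul]
    _ ≤ ∑ i, |x i| * (1 / lam ⟨0, hp⟩) :=
      Finset.sum_le_sum fun i _ => mul_le_mul_of_nonneg_left (hb i) (abs_nonneg _)

lemma mem_nonempty {p : ℕ} (lam x : Fin p → ℝ) :
    Set.Nonempty {c | ∃ v : Fin p → ℝ, Jlam lam v ≤ 1 ∧ c = ∑ i, x i * v i} := by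
  refine ⟨0, 0, ?_, by simp⟩
  have : Jlam lam 0 = 0 := by simp [Jlam, absSorted]
  simp [this]

lemma JlamD_le {p : ℕ} (hp : 0 < p) (lam : Fin p → ℝ) (hnn : ∀ i, 0 ≤ lam i)
    (hlam1 : 0 < lam ⟨0, hp⟩) (x y : Fin p → ℝ)
    (H : ∀ v : Fin p → ℝ, Jlam lam v ≤ 1 →
      ∃ v' : Fin p → ℝ, Jlam lam v' ≤ 1 ∧ (∑ i, y i * v i) ≤ ∑ i, x i * v' i) :
    JlamD lam y ≤ JlamD lam x := by
  apply csSup_le (mem_nonempty lam y)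
  rintro c ⟨v, hv, rfl⟩
  obtain ⟨v', hv', hle⟩ := H v hv
  exact hle.trans (le_csSup (mem_bdd hp lam hnn hlam1 x) ⟨v', hv', rfl⟩)

lemma sum_update_mul {p : ℕ} (x v : Fin p → ℝ) (j : Fin p) (a : ℝ) :
    ∑ i, Function.update x j a i * v i = (∑ i, x i * v i) + (a - x j) * v j := by
  have h : (fun i => Function.update x j a i * v i)
      = Function.update (fun i => x i * v i) j (a * v j) := by
    funext i
    by_cases hi : i = j
    · subst hi; simp
    · simp [Function.update_of_ne hi]
  rw [h, Finset.sum_update_of_mem (Finset.mem_univ j), Finset.sdiff_singleton_eq_erase]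
  have h2 : (∑ i ∈ Finset.univ.erase j, x i * v i) + x j * v j = ∑ i, x i * v i :=
    Finset.sum_erase_add Finset.univ (fun i => x i * v i) (Finset.mem_univ j)
  linarith [h2]

lemma sum_mul_update {p : ℕ} (x v : Fin p → ℝ) (j : Fin p) (a : ℝ) :
    ∑ i, x i * Function.update v j a i = (∑ i, x i * v i) + x j * (a - v j) := by
  have h : (fun i => x i * Function.update v j a i)
      = Function.update (fun i => x i * v i) j (x j * a) := by
    funext i
    by_cases hi : i = j
    · subst hi; simp
    · simp [Function.update_of_ne hi]
  rw [h, Finset.sum_update_of_mem (Finset.mem_univ j), Finset.sdiff_singleton_eq_erase]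
  have h2 : (∑ i ∈ Finset.univ.erase j, x i * v i) + x j * v j = ∑ i, x i * v i :=
    Finset.sum_erase_add Finset.univ (fun i => x i * v i) (Finset.mem_univ j)
  linarith [h2]

/-- monotonicity of the dual ordered ℓ1-norm under "pulling to the mean"
(part i) and "pulling to zero" (part ii). -/
theorem JlamD_pull {p : ℕ} (hp : 0 < p) (lam : Fin p → ℝ)
    (hlam : Antitone lam) (hnn : ∀ i, 0 ≤ lam i) (hlam1 : 0 < lam ⟨0, hp⟩)
    (x : Fin p → ℝ) (j l : Fin p) :
    -- (i) pulling two coordinates with x_j > x_l ≥ 0 towards each other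
    ((0 ≤ x l → x l < x j → ∀ ε : ℝ, 0 < ε → ε ≤ (x j - x l) / 2 →
      JlamD lam (Function.update (Function.update x j (x j - ε)) l (x l + ε))
        ≤ JlamD lam x)) ∧
    -- (ii) pulling a positive coordinate towards zero
    (0 < x j → ∀ ε : ℝ, 0 < ε → ε ≤ x j →
      JlamD lam (Function.update x j (x j - ε)) ≤ JlamD lam x) := by
  constructor
  · -- part (i)
    intro hl hlj ε hε hε2
    have hne : l ≠ j := fun h => by rw [h] at hlj; exact lt_irrefl _ hlj
    apply JlamD_le hp lam hnn hlam1
    intro v hv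
    set y := Function.update (Function.update x j (x j - ε)) l (x l + ε) with hy
    have hsum : (∑ i, y i * v i) = (∑ i, x i * v i) + ε * v l - ε * v j := by
      rw [hy, sum_update_mul, sum_update_mul, Function.update_of_ne hne]
      ring
    by_cases hc : v l ≤ v j
    · exact ⟨v, hv, by rw [hsum]; nlinarith⟩
    · push_neg at hc
      set v' := Function.update (Function.update v j (v l)) l (v j) with hv'
      have habs : ∀ i, |v' i| = |v (Equiv.swap j l i)| := by
        intro i
        by_cases hil : i = l
        · subst hil; rw [hv']; simp [Equiv.swap_apply_right]
        · by_cases hij : i = j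
          · subst hij
            rw [hv', Function.update_of_ne (Ne.symm hne), Function.update_self,
              Equiv.swap_apply_left]
          · rw [hv', Function.update_of_ne hil, Function.update_of_ne hij,
              Equiv.swap_apply_of_ne_of_ne hij hil]
      have hJ : Jlam lam v' = Jlam lam v := Jlam_comp lam v v' (Equiv.swap j l) habs
      refine ⟨v', by rw [hJ]; exact hv, ?_⟩
      have hsum' : (∑ i, x i * v' i)
          = (∑ i, x i * v i) + x j * (v l - v j) + x l * (v j - v l) := by
        rw [hv', sum_mul_update, sum_mul_update, Function.update_of_ne hne]
      rw [hsum, hsum']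
      have hd : ε ≤ x j - x l := by linarith
      have := mul_le_mul_of_nonneg_right hd (by linarith : (0:ℝ) ≤ v l - v j)
      nlinarith
  · -- part (ii)
    intro hxj ε hε hεx
    apply JlamD_le hp lam hnn hlam1
    intro v hv
    refine ⟨Function.update v j |v j|, ?_, ?_⟩
    · have habs : ∀ i, |Function.update v j |v j| i| = |v (Equiv.refl (Fin p) i)| := by
        intro i
        by_cases hij : i = j
        · subst hij; simp
        · simp [Function.update_of_ne hij]
      rw [Jlam_comp lam v _ (Equiv.refl _) habs]
      exact hv
    · rw [sum_update_mul, sum_mul_update]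
      have h1 : (0:ℝ) ≤ (x j - ε) * (|v j| - v j) :=
        mul_nonneg (by linarith) (by linarith [le_abs_self (v j)])
      have h2 : (0:ℝ) ≤ ε * |v j| := mul_nonneg hε.le (abs_nonneg _)
      nlinarith
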